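/- Let σ and ω be positive locally finite Borel measures on ℝⁿ, let Q ⊆ ℝⁿ be a Borel set, and suppose the set of common atoms of σ and ω contained in Q is finite of even cardinality 2N with N ≥ 1, say {p₁,…,p_{2N}}. Then {1,…,2N} can be partitioned into two sets A and B with |A| = |B| = N such that Σ_{k∈A} σ({p_k}) ≥ (1/2) Σ_{k=1}^{2N} σ({p_k}) and Σ_{k∈B} ω({p_k}) ≥ (1/2)(Σ_{k=1}^{2N} ω({p_k}) − max_{1≤k≤2N} ω({p_k})). Consequently, the measures σ̃ := 1_Q σ − Σ_{k∈B} σ({p_k}) δ_{p_k} and ω̃ := 1_Q ω − Σ_{k∈A} ω({p_k}) δ_{p_k} are nonnegative, σ̃ and ω̃ have no common atoms, σ̃(Q) ≥ (1/2) σ(Q), and ω̃(Q) ≥ (1/2) ω(Q, 𝔓_{(σ,ω)}). -/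

import Mathlib

open MeasureTheory
open scoped ENNReal NNReal

noncomputable section

/-- The set of common atoms `𝔓_{(σ,ω)}` of two measures. -/
def commonAtoms {n : ℕ} (σ ω : Measure (EuclideanSpace ℝ (Fin n))) :
    Set (EuclideanSpace ℝ (Fin n)) :=
  {p | σ {p} ≠ 0 ∧ ω {p} ≠ 0}

private lemma restrict_image_finset {α : Type*} [MeasurableSpace α] [MeasurableSingletonClass α]
    (μ : Measure α) {ι : Type*} (q : ι → α) (hq : Function.Injective q)
    (t : Finset ι) :
    μ.restrict (q '' ↑t) = ∑ k ∈ t, μ {q k} • Measure.dirac (q k) := by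
  classical
  induction t using Finset.induction_on with
  | empty => simp
  | @insert a s ha ih =>
    have hd : Disjoint ({q a} : Set α) (q '' ↑s) := by
      simp only [Set.disjoint_singleton_left, Set.mem_image, not_exists, not_and]
      intro k hk hkq
      apply ha
      rw [← hq hkq]
      exact_mod_cast hk
    have hm : MeasurableSet (q '' (↑s : Set ι)) := (s.finite_toSet.image q).measurableSet
    rw [Finset.coe_insert, Set.image_insert_eq, Set.insert_eq,
      Measure.restrict_union hd hm, Measure.restrict_singleton, ih,
      Finset.sum_insert ha]

private lemma measure_image_finset {α : Type*} [MeasurableSpace α] [MeasurableSingletonClass α]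
    (μ : Measure α) {ι : Type*} (q : ι → α) (hq : Function.Injective q)
    (t : Finset ι) :
    μ (q '' ↑t) = ∑ k ∈ t, μ {q k} := by
  have h := congrArg (fun m : Measure α => m Set.univ) (restrict_image_finset μ q hq t)
  simpa [Measure.restrict_apply_univ, Measure.finset_sum_apply] using h

private lemma split_finset (M : ℕ) (f g : Fin (2 * (M + 1)) → ℝ≥0∞) :
    ∃ A B : Finset (Fin (2 * (M + 1))),
      A ∪ B = Finset.univ ∧ Disjoint A B ∧ A.card = M + 1 ∧ B.card = M + 1 ∧
      (∑ k, f k) / 2 ≤ ∑ k ∈ A, f k ∧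
      ((∑ k, g k) - ⨆ k, g k) / 2 ≤ ∑ k ∈ B, g k ∧
      (∑ k ∈ B, f k) ≤ ∑ k ∈ A, f k ∧
      (∑ k ∈ A, g k) ≤ (∑ k ∈ B, g k) + ⨆ k, g k := by
  classical
  set e := Tuple.sort g with he
  have hmono : Monotone (g ∘ e) := Tuple.monotone_sort g
  have hlo : ∀ i : Fin (M + 1), 2 * (i : ℕ) < 2 * (M + 1) := fun i => by
    have := i.isLt; omega
  have hhi : ∀ i : Fin (M + 1), 2 * (i : ℕ) + 1 < 2 * (M + 1) := fun i => by
    have := i.isLt; omega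
  set lo : Fin (M + 1) → Fin (2 * (M + 1)) := fun i => ⟨2 * i, hlo i⟩ with hlodef
  set hi : Fin (M + 1) → Fin (2 * (M + 1)) := fun i => ⟨2 * i + 1, hhi i⟩ with hhidef
  set a : Fin (M + 1) → Fin (2 * (M + 1)) := fun i =>
    if f (e (hi i)) ≤ f (e (lo i)) then e (lo i) else e (hi i) with hadef
  set b : Fin (M + 1) → Fin (2 * (M + 1)) := fun i =>
    if f (e (hi i)) ≤ f (e (lo i)) then e (hi i) else e (lo i) with hbdef
  have hchoice : ∀ i, (a i = e (lo i) ∧ b i = e (hi i)) ∨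
      (a i = e (hi i) ∧ b i = e (lo i)) := by
    intro i
    by_cases h : f (e (hi i)) ≤ f (e (lo i))
    · exact Or.inl ⟨if_pos h, if_pos h⟩
    · exact Or.inr ⟨if_neg h, if_neg h⟩
  have hfba : ∀ i, f (b i) ≤ f (a i) := by
    intro i
    by_cases h : f (e (hi i)) ≤ f (e (lo i))
    · simpa [hadef, hbdef, if_pos h] using h
    · simpa [hadef, hbdef, if_neg h] using le_of_not_ge h
  have hlelohi : ∀ i : Fin (M + 1), g (e (lo i)) ≤ g (e (hi i)) := by
    intro i
    exact hmono (by simp [hlodef, hhidef, Fin.le_def])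
  have hglo : ∀ i, g (e (lo i)) ≤ g (b i) := by
    intro i
    rcases hchoice i with ⟨_, h2⟩ | ⟨_, h2⟩
    · rw [h2]; exact hlelohi i
    · rw [h2]
  have hghi : ∀ i, g (a i) ≤ g (e (hi i)) := by
    intro i
    rcases hchoice i with ⟨h1, _⟩ | ⟨h1, _⟩
    · rw [h1]; exact hlelohi i
    · rw [h1]
  have pairinj : ∀ {x y : Fin (M + 1)} {u v : Fin (2 * (M + 1))},
      (u = lo x ∨ u = hi x) → (v = lo y ∨ v = hi y) → e u = e v → x = y := by
    rintro x y u v (rfl | rfl) (rfl | rfl) h <;>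
      · have := congrArg Fin.val (e.injective h)
        simp only [hlodef, hhidef] at this
        exact Fin.ext (by omega)
  have elohi : ∀ x : Fin (M + 1), e (lo x) ≠ e (hi x) := by
    intro x h
    have := congrArg Fin.val (e.injective h)
    simp only [hlodef, hhidef] at this
    omega
  have ha_inj : Function.Injective a := by
    intro x y h
    rcases hchoice x with ⟨h1, _⟩ | ⟨h1, _⟩ <;> rcases hchoice y with ⟨h2, _⟩ | ⟨h2, _⟩
    · exact pairinj (Or.inl rfl) (Or.inl rfl) (by rw [← h1, ← h2]; exact h)
    · exact pairinj (Or.inl rfl) (Or.inr rfl) (by rw [← h1, ← h2]; exact h)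
    · exact pairinj (Or.inr rfl) (Or.inl rfl) (by rw [← h1, ← h2]; exact h)
    · exact pairinj (Or.inr rfl) (Or.inr rfl) (by rw [← h1, ← h2]; exact h)
  have hb_inj : Function.Injective b := by
    intro x y h
    rcases hchoice x with ⟨_, h1⟩ | ⟨_, h1⟩ <;> rcases hchoice y with ⟨_, h2⟩ | ⟨_, h2⟩
    · exact pairinj (Or.inr rfl) (Or.inr rfl) (by rw [← h1, ← h2]; exact h)
    · exact pairinj (Or.inr rfl) (Or.inl rfl) (by rw [← h1, ← h2]; exact h)
    · exact pairinj (Or.inl rfl) (Or.inr rfl) (by rw [← h1, ← h2]; exact h)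
    · exact pairinj (Or.inl rfl) (Or.inl rfl) (by rw [← h1, ← h2]; exact h)
  have hab : ∀ x y : Fin (M + 1), a x ≠ b y := by
    intro x y h
    rcases hchoice x with ⟨h1, h1'⟩ | ⟨h1, h1'⟩ <;> rcases hchoice y with ⟨h2', h2⟩ | ⟨h2', h2⟩
    · -- a x = e (lo x), b y = e (hi y)
      have hxy : x = y := pairinj (Or.inl rfl) (Or.inr rfl) (by rw [← h1, ← h2]; exact h)
      subst hxy
      exact elohi x (h1.symm.trans (h.trans h2))
    · -- a x = e (lo x), b y = e (lo y) (with a y = e (hi y))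
      have hxy : x = y := pairinj (Or.inl rfl) (Or.inl rfl) (by rw [← h1, ← h2]; exact h)
      subst hxy
      exact elohi x (h1.symm.trans h2')
    · -- a x = e (hi x), b y = e (hi y) (with b x = e (lo x))
      have hxy : x = y := pairinj (Or.inr rfl) (Or.inr rfl) (by rw [← h1, ← h2]; exact h)
      subst hxy
      exact elohi x (h2'.symm.trans h1)
    · -- a x = e (hi x), b y = e (lo y)
      have hxy : x = y := pairinj (Or.inr rfl) (Or.inl rfl) (by rw [← h1, ← h2]; exact h)
      subst hxy
      exact elohi x (h2.symm.trans (h.symm.trans h1))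
  set A : Finset (Fin (2 * (M + 1))) := Finset.univ.image a with hAdef
  set B : Finset (Fin (2 * (M + 1))) := Finset.univ.image b with hBdef
  have hAcard : A.card = M + 1 := by
    rw [hAdef, Finset.card_image_of_injective _ ha_inj, Finset.card_univ, Fintype.card_fin]
  have hBcard : B.card = M + 1 := by
    rw [hBdef, Finset.card_image_of_injective _ hb_inj, Finset.card_univ, Fintype.card_fin]
  have hdisj : Disjoint A B := by
    rw [Finset.disjoint_left]
    intro k hkA hkB
    rw [hAdef, Finset.mem_image] at hkA
    rw [hBdef, Finset.mem_image] at hkB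
    obtain ⟨i, _, hik⟩ := hkA
    obtain ⟨j, _, hjk⟩ := hkB
    exact hab i j (hik.trans hjk.symm)
  have hunion : A ∪ B = Finset.univ := by
    apply Finset.eq_univ_of_card
    rw [Finset.card_union_of_disjoint hdisj, hAcard, hBcard, Fintype.card_fin]
    omega
  have hsumA : ∀ h : Fin (2 * (M + 1)) → ℝ≥0∞, ∑ k ∈ A, h k = ∑ i, h (a i) := by
    intro h
    rw [hAdef]
    exact Finset.sum_image fun x _ y _ hxy => ha_inj hxy
  have hsumB : ∀ h : Fin (2 * (M + 1)) → ℝ≥0∞, ∑ k ∈ B, h k = ∑ i, h (b i) := by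
    intro h
    rw [hBdef]
    exact Finset.sum_image fun x _ y _ hxy => hb_inj hxy
  have htot : ∀ h : Fin (2 * (M + 1)) → ℝ≥0∞,
      ∑ k, h k = (∑ i, h (a i)) + ∑ i, h (b i) := by
    intro h
    rw [← hsumA, ← hsumB, ← Finset.sum_union hdisj, hunion]
  have hBA : (∑ k ∈ B, f k) ≤ ∑ k ∈ A, f k := by
    rw [hsumA, hsumB]
    exact Finset.sum_le_sum fun i _ => hfba i
  have hAf : (∑ k, f k) / 2 ≤ ∑ k ∈ A, f k := by
    refine (ENNReal.div_le_iff_le_mul (Or.inl two_ne_zero) (Or.inl ENNReal.ofNat_ne_top)).2 ?_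
    calc ∑ k, f k = (∑ i, f (a i)) + ∑ i, f (b i) := htot f
      _ ≤ (∑ i, f (a i)) + ∑ i, f (a i) :=
          add_le_add le_rfl (Finset.sum_le_sum fun i _ => hfba i)
      _ = (∑ k ∈ A, f k) * 2 := by rw [hsumA]; ring
  -- key shift inequality
  have hkey : (∑ i, g (e (hi i))) ≤ (∑ i, g (e (lo i))) + ⨆ k, g k := by
    rw [Fin.sum_univ_castSucc (f := fun i => g (e (hi i)))]
    have h1 : (∑ i : Fin M, g (e (hi i.castSucc))) ≤ ∑ i : Fin (M + 1), g (e (lo i)) := by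
      rw [Fin.sum_univ_succ (f := fun i => g (e (lo i)))]
      calc (∑ i : Fin M, g (e (hi i.castSucc))) ≤ ∑ i : Fin M, g (e (lo i.succ)) := by
            refine Finset.sum_le_sum fun i _ => hmono ?_
            simp [hlodef, hhidef, Fin.le_def]
        _ ≤ g (e (lo 0)) + ∑ i : Fin M, g (e (lo i.succ)) := le_add_self
    exact add_le_add h1 (le_iSup g _)
  have hBg' : (∑ i, g (e (lo i))) ≤ ∑ k ∈ B, g k := by
    rw [hsumB]
    exact Finset.sum_le_sum fun i _ => hglo i
  have htotg : ∑ k, g k = (∑ i, g (a i)) + ∑ i, g (b i) := htot g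
  have hpairg : (∑ i, g (a i)) + (∑ i, g (b i)) = (∑ i, g (e (lo i))) + ∑ i, g (e (hi i)) := by
    rw [← Finset.sum_add_distrib, ← Finset.sum_add_distrib]
    refine Finset.sum_congr rfl fun i _ => ?_
    rcases hchoice i with ⟨h1, h2⟩ | ⟨h1, h2⟩
    · rw [h1, h2]
    · rw [h1, h2, add_comm]
  have hBgfinal : ((∑ k, g k) - ⨆ k, g k) / 2 ≤ ∑ k ∈ B, g k := by
    refine (ENNReal.div_le_iff_le_mul (Or.inl two_ne_zero) (Or.inl ENNReal.ofNat_ne_top)).2 ?_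
    rw [tsub_le_iff_right]
    calc ∑ k, g k = (∑ i, g (e (lo i))) + ∑ i, g (e (hi i)) := by rw [htotg, hpairg]
      _ ≤ (∑ i, g (e (lo i))) + ((∑ i, g (e (lo i))) + ⨆ k, g k) := add_le_add le_rfl hkey
      _ ≤ (∑ k ∈ B, g k) + ((∑ k ∈ B, g k) + ⨆ k, g k) :=
          add_le_add hBg' (add_le_add hBg' le_rfl)
      _ = (∑ k ∈ B, g k) * 2 + ⨆ k, g k := by ring
  have hABg : (∑ k ∈ A, g k) ≤ (∑ k ∈ B, g k) + ⨆ k, g k := by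
    calc ∑ k ∈ A, g k = ∑ i, g (a i) := hsumA g
      _ ≤ ∑ i, g (e (hi i)) := Finset.sum_le_sum fun i _ => hghi i
      _ ≤ (∑ i, g (e (lo i))) + ⨆ k, g k := hkey
      _ ≤ (∑ k ∈ B, g k) + ⨆ k, g k := add_le_add hBg' le_rfl
  exact ⟨A, B, hunion, hdisj, hAcard, hBcard, hAf, hBgfinal, hBA, hABg⟩

/-- Measure-splitting at common point masses: if the common atoms of `σ`
and `ω` inside a Borel set `Q` are `p₁, …, p_{2N}` (`N ≥ 1`), then `{1,…,2N}` can be split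
into halves `A`, `B` with `Σ_{k∈A} σ({p_k}) ≥ ½ Σ σ({p_k})` and
`Σ_{k∈B} ω({p_k}) ≥ ½ (Σ ω({p_k}) − max ω({p_k}))`; consequently the (nonnegative) measures
`σ̃ = 1_Q σ − Σ_{k∈B} σ({p_k}) δ_{p_k}` and `ω̃ = 1_Q ω − Σ_{k∈A} ω({p_k}) δ_{p_k}` have no
common atoms, `σ̃(Q) ≥ ½ σ(Q)` and `ω̃(Q) ≥ ½ ω(Q, 𝔓_{(σ,ω)})`. -/
theorem statement2 (n N : ℕ) (hN : 1 ≤ N)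
    (σ ω : Measure (EuclideanSpace ℝ (Fin n)))
    (hσ : IsLocallyFiniteMeasure σ) (hω : IsLocallyFiniteMeasure ω)
    (Q : Set (EuclideanSpace ℝ (Fin n))) (hQ : MeasurableSet Q)
    (p : Fin (2 * N) → EuclideanSpace ℝ (Fin n)) (hp : Function.Injective p)
    (hpQ : Q ∩ commonAtoms σ ω = Set.range p) :
    ∃ A B : Finset (Fin (2 * N)),
      A ∪ B = Finset.univ ∧ Disjoint A B ∧ A.card = N ∧ B.card = N ∧
      (∑ k : Fin (2 * N), σ {p k}) / 2 ≤ ∑ k ∈ A, σ {p k} ∧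
      ((∑ k : Fin (2 * N), ω {p k}) - ⨆ k, ω {p k}) / 2 ≤ ∑ k ∈ B, ω {p k} ∧
      ∃ σt ωt : Measure (EuclideanSpace ℝ (Fin n)),
        σt + (∑ k ∈ B, σ {p k} • Measure.dirac (p k)) = σ.restrict Q ∧
        ωt + (∑ k ∈ A, ω {p k} • Measure.dirac (p k)) = ω.restrict Q ∧
        commonAtoms σt ωt = ∅ ∧
        σ Q / 2 ≤ σt Q ∧
        (ω Q - ⨆ q ∈ Q ∩ commonAtoms σ ω, ω {q}) / 2 ≤ ωt Q := by
  classical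
  obtain ⟨M, rfl⟩ : ∃ M, N = M + 1 := ⟨N - 1, by omega⟩
  obtain ⟨A, B, hunion, hdisj, hAcard, hBcard, hAf, hBg, hBA, hABg⟩ :=
    split_finset M (fun k => σ {p k}) (fun k => ω {p k})
  refine ⟨A, B, hunion, hdisj, hAcard, hBcard, hAf, hBg, ?_⟩
  have hrange : Set.range p ⊆ Q := by rw [← hpQ]; exact Set.inter_subset_left
  have hPAQ : p '' ↑A ⊆ Q := (Set.image_subset_range p ↑A).trans hrange
  have hPBQ : p '' ↑B ⊆ Q := (Set.image_subset_range p ↑B).trans hrange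
  have hPAm : MeasurableSet (p '' (↑A : Set (Fin (2 * (M + 1))))) :=
    (A.finite_toSet.image p).measurableSet
  have hPBm : MeasurableSet (p '' (↑B : Set (Fin (2 * (M + 1))))) :=
    (B.finite_toSet.image p).measurableSet
  have hPAPB : Disjoint (p '' (↑A : Set (Fin (2 * (M + 1))))) (p '' ↑B) := by
    rw [Set.disjoint_left]
    rintro x ⟨i, hi, rfl⟩ ⟨j, hj, hji⟩
    have hji' : j = i := hp hji
    exact (Finset.disjoint_left.1 hdisj (Finset.mem_coe.1 hi)) (hji' ▸ Finset.mem_coe.1 hj)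
  have hPBPA : Disjoint (p '' (↑B : Set (Fin (2 * (M + 1))))) (p '' ↑A) := hPAPB.symm
  refine ⟨σ.restrict (Q \ p '' ↑B), ω.restrict (Q \ p '' ↑A), ?_, ?_, ?_, ?_, ?_⟩
  · rw [← restrict_image_finset σ p hp B,
      ← Measure.restrict_union disjoint_sdiff_self_left hPBm,
      Set.diff_union_of_subset hPBQ]
  · rw [← restrict_image_finset ω p hp A,
      ← Measure.restrict_union disjoint_sdiff_self_left hPAm,
      Set.diff_union_of_subset hPAQ]
  · rw [Set.eq_empty_iff_forall_notMem]
    rintro q ⟨hq1, hq2⟩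
    have key : ∀ (μ : Measure (EuclideanSpace ℝ (Fin n))) (S : Set (EuclideanSpace ℝ (Fin n))),
        μ.restrict S {q} ≠ 0 → q ∈ S ∧ μ {q} ≠ 0 := by
      intro μ S hμ
      rw [Measure.restrict_apply (measurableSet_singleton q)] at hμ
      by_cases hqS : q ∈ S
      · refine ⟨hqS, fun h0 => hμ ?_⟩
        exact le_antisymm ((measure_mono Set.inter_subset_left).trans h0.le) zero_le
      · exact absurd (by rw [Set.singleton_inter_eq_empty.2 hqS, measure_empty]) hμ
    obtain ⟨hq1S, hq1m⟩ := key σ _ hq1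
    obtain ⟨hq2S, hq2m⟩ := key ω _ hq2
    have hqmem : q ∈ Q ∩ commonAtoms σ ω := ⟨hq1S.1, hq1m, hq2m⟩
    rw [hpQ] at hqmem
    obtain ⟨k, rfl⟩ := hqmem
    have hk : k ∈ A ∪ B := hunion ▸ Finset.mem_univ k
    rcases Finset.mem_union.1 hk with hk | hk
    · exact hq2S.2 (Set.mem_image_of_mem p (Finset.mem_coe.2 hk))
    · exact hq1S.2 (Set.mem_image_of_mem p (Finset.mem_coe.2 hk))
  · -- σ Q / 2 ≤ σt Q
    have hval : σ.restrict (Q \ p '' ↑B) Q = σ (Q \ p '' ↑B) := by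
      rw [Measure.restrict_apply hQ, Set.inter_eq_self_of_subset_right Set.diff_subset]
    rw [hval]
    refine (ENNReal.div_le_iff_le_mul (Or.inl two_ne_zero) (Or.inl ENNReal.ofNat_ne_top)).2 ?_
    have hsplit : σ Q = σ (Q \ p '' ↑B) + ∑ k ∈ B, σ {p k} := by
      rw [← measure_image_finset σ p hp B]
      rw [← measure_union disjoint_sdiff_self_left hPBm, Set.diff_union_of_subset hPBQ]
    have hAle : (∑ k ∈ A, σ {p k}) ≤ σ (Q \ p '' ↑B) := by
      rw [← measure_image_finset σ p hp A]
      exact measure_mono (Set.subset_diff.2 ⟨hPAQ, hPAPB⟩)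
    calc σ Q = σ (Q \ p '' ↑B) + ∑ k ∈ B, σ {p k} := hsplit
      _ ≤ σ (Q \ p '' ↑B) + ∑ k ∈ A, σ {p k} := add_le_add le_rfl hBA
      _ ≤ σ (Q \ p '' ↑B) + σ (Q \ p '' ↑B) := add_le_add le_rfl hAle
      _ = σ (Q \ p '' ↑B) * 2 := (mul_two _).symm
  · -- ω side
    have hsup : (⨆ q ∈ Q ∩ commonAtoms σ ω, ω {q}) = ⨆ k, ω {p k} := by
      rw [hpQ, iSup_range]
    have hval : ω.restrict (Q \ p '' ↑A) Q = ω (Q \ p '' ↑A) := by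
      rw [Measure.restrict_apply hQ, Set.inter_eq_self_of_subset_right Set.diff_subset]
    rw [hval, hsup]
    refine (ENNReal.div_le_iff_le_mul (Or.inl two_ne_zero) (Or.inl ENNReal.ofNat_ne_top)).2 ?_
    rw [tsub_le_iff_right]
    have hsplit : ω Q = ω (Q \ p '' ↑A) + ∑ k ∈ A, ω {p k} := by
      rw [← measure_image_finset ω p hp A]
      rw [← measure_union disjoint_sdiff_self_left hPAm, Set.diff_union_of_subset hPAQ]
    have hBle : (∑ k ∈ B, ω {p k}) ≤ ω (Q \ p '' ↑A) := by
      rw [← measure_image_finset ω p hp B]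
      exact measure_mono (Set.subset_diff.2 ⟨hPBQ, hPBPA⟩)
    calc ω Q = ω (Q \ p '' ↑A) + ∑ k ∈ A, ω {p k} := hsplit
      _ ≤ ω (Q \ p '' ↑A) + ((∑ k ∈ B, ω {p k}) + ⨆ k, ω {p k}) := add_le_add le_rfl hABg
      _ ≤ ω (Q \ p '' ↑A) + (ω (Q \ p '' ↑A) + ⨆ k, ω {p k}) :=
          add_le_add le_rfl (add_le_add hBle le_rfl)
      _ = ω (Q \ p '' ↑A) * 2 + ⨆ k, ω {p k} := by ring
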